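/- In any accepting computation of the queue automaton on V = ∏_{j=ℓ,…,1} (c₁ x^j y^j c₂)², no x is matched with another x from the same maximal block x^j, and no y is matched with another y from the same maximal block y^j. -/

import Mathlib

/-- `Shuffle u v w` : `w` is an interleaving of `u` and `v`
preserving the internal order of each. -/
inductive Shuffle {α : Type*} : List α → List α → List α → Prop
  | nil : Shuffle [] [] []
  | left {u v w : List α} (a : α) : Shuffle u v w → Shuffle (a :: u) v (a :: w)
  | right {u v w : List α} (a : α) : Shuffle u v w → Shuffle u (a :: v) (a :: w)

/-- `Run Q i x P` : starting with queue `Q` (a list of pairs of an input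
position and the symbol enqueued from it), with the next input symbol at
position `i` and remaining input `x`, the queue automaton can reach the
accepting configuration (empty queue, empty input), producing the list `P`
of matched pairs `(enqueue position, match position)` along the way. -/
inductive Run {α : Type*} : List (ℕ × α) → ℕ → List α → List (ℕ × ℕ) → Prop
  | done (i : ℕ) : Run [] i [] []
  | enq {Q : List (ℕ × α)} {i : ℕ} {a : α} {x : List α} {P : List (ℕ × ℕ)} :
      Run (Q ++ [(i, a)]) (i + 1) x P → Run Q i (a :: x) P
  | deq {Q : List (ℕ × α)} {i j : ℕ} {a : α} {x : List α} {P : List (ℕ × ℕ)} :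
      Run Q (i + 1) x P → Run ((j, a) :: Q) i (a :: x) ((j, i) :: P)

/-- The word `v_j = c₁ x^j y^j c₂`. -/
def vblk {α : Type*} (c₁ c₂ x y : α) (j : ℕ) : List α :=
  c₁ :: (List.replicate j x ++ List.replicate j y ++ [c₂])

/-- The word `V = v_ℓ v_ℓ ⋯ v₂ v₂ v₁ v₁`. -/
def Vword {α : Type*} (c₁ c₂ x y : α) : ℕ → List α
  | 0 => []
  | (j + 1) =>
      vblk c₁ c₂ x y (j + 1) ++ vblk c₁ c₂ x y (j + 1) ++ Vword c₁ c₂ x y j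

section AuxLemmas

lemma run_fst {α : Type*} {Q : List (ℕ × α)} {i : ℕ} {x : List α} {P : List (ℕ × ℕ)}
    (h : Run Q i x P) :
    ∃ L : List ℕ, P.map Prod.fst = Q.map Prod.fst ++ L ∧ L.Pairwise (· < ·) ∧
      ∀ m ∈ L, i ≤ m := by
  induction h with
  | done i => exact ⟨[], by simp⟩
  | @enq Q i a x P h ih =>
    obtain ⟨L, hL, hs, hge⟩ := ih
    refine ⟨i :: L, by simpa using hL, ?_, ?_⟩
    · exact List.pairwise_cons.2 ⟨fun m hm => lt_of_lt_of_le (Nat.lt_succ_self i) (hge m hm), hs⟩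
    · intro m hm
      rcases List.mem_cons.1 hm with rfl | hm
      · exact le_rfl
      · exact le_of_lt (lt_of_lt_of_le (Nat.lt_succ_self i) (hge m hm))
  | @deq Q i j a x P h ih =>
    obtain ⟨L, hL, hs, hge⟩ := ih
    exact ⟨L, by simpa using hL, hs,
      fun m hm => le_of_lt (lt_of_lt_of_le (Nat.lt_succ_self _) (hge m hm))⟩

lemma run_snd {α : Type*} {Q : List (ℕ × α)} {i : ℕ} {x : List α} {P : List (ℕ × ℕ)}
    (h : Run Q i x P) :
    (P.map Prod.snd).Pairwise (· < ·) ∧ ∀ m ∈ P.map Prod.snd, i ≤ m := by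
  induction h with
  | done i => simp
  | @enq Q i a x P h ih =>
    exact ⟨ih.1, fun m hm => le_of_lt (lt_of_lt_of_le (Nat.lt_succ_self _) (ih.2 m hm))⟩
  | @deq Q i j a x P h ih =>
    constructor
    · simp only [List.map_cons]
      exact List.pairwise_cons.2 ⟨fun m hm => lt_of_lt_of_le (Nat.lt_succ_self _) (ih.2 m hm), ih.1⟩
    · rintro m hm
      simp only [List.map_cons, List.mem_cons] at hm
      rcases hm with rfl | hm
      · exact le_rfl
      · exact le_of_lt (lt_of_lt_of_le (Nat.lt_succ_self _) (ih.2 m hm))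

lemma run_symbols {α : Type*} {Q : List (ℕ × α)} {i : ℕ} {x : List α} {P : List (ℕ × ℕ)}
    (h : Run Q i x P) (w : ℕ → Option α)
    (hQ : ∀ pr ∈ Q, pr.1 < i ∧ w pr.1 = some pr.2)
    (hx : ∀ k, w (i + k) = x[k]?) :
    ∀ pr ∈ P, pr.1 < pr.2 ∧ ∃ a : α, w pr.1 = some a ∧ w pr.2 = some a := by
  induction h with
  | done i => simp
  | @enq Q i a x P h ih =>
    refine ih ?_ ?_
    · intro pr hpr
      rcases List.mem_append.1 hpr with hpr | hpr
      · exact ⟨Nat.lt_succ_of_lt (hQ pr hpr).1, (hQ pr hpr).2⟩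
      · simp only [List.mem_singleton] at hpr
        subst hpr
        exact ⟨Nat.lt_succ_self i, by simpa using hx 0⟩
    · intro k
      simpa [show i + 1 + k = i + (k + 1) from by omega] using hx (k + 1)
  | @deq Q i j a x P h ih =>
    intro pr hpr
    rcases List.mem_cons.1 hpr with rfl | hpr
    · refine ⟨(hQ (j, a) (by simp)).1, a, (hQ (j, a) (by simp)).2, ?_⟩
      simpa using hx 0
    · exact ih (fun pr2 hpr2 => ⟨Nat.lt_succ_of_lt (hQ pr2 (by simp [hpr2])).1,
        (hQ pr2 (by simp [hpr2])).2⟩)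
        (fun k => by simpa [show i + 1 + k = i + (k + 1) from by omega] using hx (k + 1)) pr hpr

lemma run_perm {α : Type*} {Q : List (ℕ × α)} {i : ℕ} {x : List α} {P : List (ℕ × ℕ)}
    (h : Run Q i x P) :
    (P.map Prod.fst ++ P.map Prod.snd).Perm (Q.map Prod.fst ++ List.range' i x.length) := by
  induction h with
  | done i => simp
  | @enq Q i a x P h ih =>
    rw [List.length_cons, List.range'_succ]
    refine ih.trans (List.Perm.of_eq ?_)
    simp
  | @deq Q i j a x P h ih =>
    simp only [List.map_cons, List.length_cons, List.range'_succ, List.cons_append]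
    refine List.Perm.cons j ?_
    exact List.perm_middle.trans ((ih.cons i).trans List.perm_middle.symm)
lemma nonnesting {P : List (ℕ × ℕ)}
    (h1 : (P.map Prod.fst).Pairwise (· < ·)) (h2 : (P.map Prod.snd).Pairwise (· < ·))
    {a b p q : ℕ} (ha : (a, b) ∈ P) (hp : (p, q) ∈ P) (hlt : a < p) : b < q := by
  rw [List.pairwise_map] at h1 h2
  rw [List.pairwise_iff_getElem] at h1 h2
  obtain ⟨m, hm, hma⟩ := List.mem_iff_getElem.1 ha
  obtain ⟨n, hn, hnp⟩ := List.mem_iff_getElem.1 hp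
  rcases lt_trichotomy m n with h | h | h
  · have := h2 m n hm hn h
    rw [hma, hnp] at this
    exact this
  · subst h
    rw [hma] at hnp
    injection hnp with e1 e2
    omega
  · have := h1 n m hn hm h
    rw [hma, hnp] at this
    simp only at this
    omega

lemma countP_fst_eq_snd {P : List (ℕ × ℕ)} (f : ℕ → Bool)
    (h : ∀ pr ∈ P, f pr.1 = f pr.2) :
    (P.map Prod.fst).countP f = (P.map Prod.snd).countP f := by
  induction P with
  | nil => rfl
  | cons pr P ih =>
    simp only [List.map_cons, List.countP_cons]
    rw [h pr (by simp), ih (fun pr2 hpr2 => h pr2 (by simp [hpr2]))]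

lemma countP_range_eq_count {α : Type*} [DecidableEq α] (l : List α) (c : α) (n : ℕ)
    (h : l.length ≤ n) :
    (List.range n).countP (fun r => decide (l[r]? = some c)) = l.count c := by
  induction l generalizing n with
  | nil => simp
  | cons a t ih =>
    obtain ⟨m, rfl⟩ : ∃ m, n = m + 1 := ⟨n - 1, by simp at h; omega⟩
    rw [List.range_succ_eq_map, List.countP_cons, List.countP_map]
    simp only [Function.comp_def, Nat.succ_eq_add_one, List.getElem?_cons_succ,
      List.getElem?_cons_zero]
    rw [ih m (by simpa using h)]
    rcases eq_or_ne a c with rfl | hne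
    · simp [List.count_cons]
    · simp [List.count_cons, hne, Ne.symm hne]
variable {α : Type*} [DecidableEq α] {c₁ c₂ x y : α}

lemma vblk_length (j : ℕ) : (vblk c₁ c₂ x y j).length = 2 * j + 2 := by
  simp [vblk]; omega

lemma vblk_getElem_pos (h₂ : c₁ ≠ x) (h₃ : c₁ ≠ y) (h₄ : c₂ ≠ x) (h₅ : c₂ ≠ y)
    {j p : ℕ}
    (h : (vblk c₁ c₂ x y j)[p]? = some x ∨ (vblk c₁ c₂ x y j)[p]? = some y) :
    1 ≤ p ∧ p ≤ 2 * j := by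
  by_contra hc
  push_neg at hc
  rcases Nat.lt_or_ge p 1 with h0 | h1
  · interval_cases p
    simp only [vblk, List.getElem?_cons_zero] at h
    rcases h with h | h <;> [exact h₂ (Option.some.inj h); exact h₃ (Option.some.inj h)]
  · have hp : 2 * j < p := hc h1
    rcases Nat.lt_or_ge p (2 * j + 2) with h2 | h2
    · have hp1 : p = 2 * j + 1 := by omega
      subst hp1
      have : (vblk c₁ c₂ x y j)[2 * j + 1]? = some c₂ := by
        simp only [vblk, List.getElem?_cons_succ]
        rw [List.getElem?_append_right (by simp [two_mul])]
        have : 2 * j - (List.replicate j x ++ List.replicate j y).length = 0 := by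
          simp; omega
        rw [this]
        rfl
      rw [this] at h
      rcases h with h | h <;> [exact h₄ (Option.some.inj h); exact h₅ (Option.some.inj h)]
    · have : (vblk c₁ c₂ x y j)[p]? = none := by
        rw [List.getElem?_eq_none]
        rw [vblk_length]; omega
      rw [this] at h
      simp at h

lemma vblk_count_c₁ (h₂ : c₁ ≠ x) (h₃ : c₁ ≠ y) (h₁ : c₁ ≠ c₂) (j : ℕ) :
    (vblk c₁ c₂ x y j).count c₁ = 1 := by
  simp [vblk, List.count_append, List.count_replicate, h₂, h₃, h₁, Ne.symm h₂, Ne.symm h₃,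
    Ne.symm h₁, List.count_cons, List.count_nil]

lemma vblk_count_c₂ (h₄ : c₂ ≠ x) (h₅ : c₂ ≠ y) (h₁ : c₁ ≠ c₂) (j : ℕ) :
    (vblk c₁ c₂ x y j).count c₂ = 1 := by
  simp [vblk, List.count_append, List.count_replicate, h₄, h₅, h₁, Ne.symm h₄, Ne.symm h₅,
    Ne.symm h₁, List.count_cons, List.count_nil]

lemma vblk_take_count (h₂ : c₁ ≠ x) (h₃ : c₁ ≠ y) (h₄ : c₂ ≠ x) (h₅ : c₂ ≠ y)
    (h₁ : c₁ ≠ c₂) {j p : ℕ} (hp1 : 1 ≤ p) (hp2 : p ≤ 2 * j + 1) :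
    ((vblk c₁ c₂ x y j).take p).count c₁ = 1 ∧
    ((vblk c₁ c₂ x y j).take p).count c₂ = 0 := by
  obtain ⟨p', rfl⟩ : ∃ p', p = p' + 1 := ⟨p - 1, by omega⟩
  rw [vblk, List.take_succ_cons]
  have hrw : (List.replicate j x ++ List.replicate j y ++ [c₂]).take p'
      = (List.replicate j x ++ List.replicate j y).take p' := by
    rw [List.take_append_of_le_length (by simp; omega)]
  rw [hrw]
  have hmem : ∀ c : α, c ≠ x → c ≠ y →
      ((List.replicate j x ++ List.replicate j y).take p').count c = 0 := by
    intro c hx hy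
    rw [List.count_eq_zero]
    intro hc
    have := List.take_subset p' _ hc
    rcases List.mem_append.1 this with h | h <;>
      [exact hx (List.eq_of_mem_replicate h); exact hy (List.eq_of_mem_replicate h)]
  constructor
  · rw [List.count_cons, hmem c₁ h₂ h₃]; simp
  · rw [List.count_cons, hmem c₂ h₄ h₅]; simp [h₁, Ne.symm h₁]

lemma parity (h₁ : c₁ ≠ c₂) (h₂ : c₁ ≠ x) (h₃ : c₁ ≠ y) (h₄ : c₂ ≠ x) (h₅ : c₂ ≠ y) :
    ∀ (ℓ p : ℕ),
      ((Vword c₁ c₂ x y ℓ)[p]? = some x ∨ (Vword c₁ c₂ x y ℓ)[p]? = some y) →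
      Odd (((Vword c₁ c₂ x y ℓ).take p).count c₁) ∨
      Odd (((Vword c₁ c₂ x y ℓ).take p).count c₂) := by
  intro ℓ
  induction ℓ with
  | zero => intro p h; simp [Vword] at h
  | succ ℓ ih =>
    intro p h
    set v := vblk c₁ c₂ x y (ℓ + 1) with hv
    have hn : v.length = 2 * (ℓ + 1) + 2 := vblk_length _
    have hV : Vword c₁ c₂ x y (ℓ + 1) = (v ++ v) ++ Vword c₁ c₂ x y ℓ := by
      rw [Vword]
    rcases Nat.lt_or_ge p v.length with hp | hp
    · -- first copy
      have hg : (Vword c₁ c₂ x y (ℓ + 1))[p]? = v[p]? := by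
        rw [hV, List.getElem?_append_left (by simp; omega), List.getElem?_append_left hp]
      rw [hg] at h
      obtain ⟨hp1, hp2⟩ := vblk_getElem_pos h₂ h₃ h₄ h₅ h
      have ht : (Vword c₁ c₂ x y (ℓ + 1)).take p = v.take p := by
        rw [hV, List.take_append, List.take_append]
        have e1 : p - v.length = 0 := by omega
        have e2 : p - (v ++ v).length = 0 := by simp; omega
        rw [e1, e2]
        simp
      rw [ht]
      refine Or.inl ?_
      rw [(vblk_take_count (j := ℓ + 1) h₂ h₃ h₄ h₅ h₁ hp1 (by omega)).1]
      exact ⟨0, rfl⟩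
    · rcases Nat.lt_or_ge p (2 * v.length) with hp' | hp'
      · -- second copy
        have hg : (Vword c₁ c₂ x y (ℓ + 1))[p]? = v[p - v.length]? := by
          rw [hV, List.getElem?_append_left (l₁ := v ++ v) (l₂ := Vword c₁ c₂ x y ℓ) (i := p)
            (by simp; omega), List.getElem?_append_right hp]
        rw [hg] at h
        obtain ⟨hp1, hp2⟩ := vblk_getElem_pos h₂ h₃ h₄ h₅ h
        have ht : (Vword c₁ c₂ x y (ℓ + 1)).take p = v ++ v.take (p - v.length) := by
          rw [hV, List.take_append, List.take_append,
            List.take_of_length_le (by omega)]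
          have e2 : p - (v ++ v).length = 0 := by simp; omega
          rw [e2]
          simp
        rw [ht]
        simp only [List.count_append]
        refine Or.inr ?_
        rw [hv, vblk_count_c₂ h₄ h₅ h₁, (vblk_take_count h₂ h₃ h₄ h₅ h₁ hp1 (by omega)).2]
        exact ⟨0, rfl⟩
      · -- in the tail
        have hg : (Vword c₁ c₂ x y (ℓ + 1))[p]? = (Vword c₁ c₂ x y ℓ)[p - 2 * v.length]? := by
          rw [hV, List.getElem?_append_right (by simp; omega)]
          congr 1
          simp; omega
        rw [hg] at h
        have ht : (Vword c₁ c₂ x y (ℓ + 1)).take p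
            = (v ++ v) ++ (Vword c₁ c₂ x y ℓ).take (p - 2 * v.length) := by
          rw [hV, List.take_append, List.take_of_length_le (by simp; omega)]
          congr 2
          simp; omega
        rw [ht, hv]
        simp only [List.count_append]
        rcases ih _ h with ⟨k, hk⟩ | ⟨k, hk⟩
        · exact Or.inl ⟨k + 1, by rw [vblk_count_c₁ h₂ h₃ h₁, hk]; ring⟩
        · exact Or.inr ⟨k + 1, by rw [vblk_count_c₂ h₄ h₅ h₁, hk]; ring⟩


end AuxLemmas

/-- in any accepting computation on
`V = ∏_{j=ℓ,…,1} (c₁ x^j y^j c₂)²`, no `x` is matched with another `x` from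
the same maximal block `x^j`, and no `y` is matched with another `y` from
the same maximal block.  (Two positions carrying the same symbol `x` lie in
the same maximal block iff every position between them also carries `x`.) -/
theorem V_no_match_within_block {α : Type*} (c₁ c₂ x y : α)
    (h₁ : c₁ ≠ c₂) (h₂ : c₁ ≠ x) (h₃ : c₁ ≠ y) (h₄ : c₂ ≠ x) (h₅ : c₂ ≠ y)
    (h₆ : x ≠ y) (ℓ : ℕ) {P : List (ℕ × ℕ)}
    (hrun : Run ([] : List (ℕ × α)) 0 (Vword c₁ c₂ x y ℓ) P)
    {p q : ℕ} (hpq : (p, q) ∈ P) :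
    ¬ (∀ r, p ≤ r → r ≤ q → (Vword c₁ c₂ x y ℓ)[r]? = some x) ∧
    ¬ (∀ r, p ≤ r → r ≤ q → (Vword c₁ c₂ x y ℓ)[r]? = some y) := by
  classical
  set V := Vword c₁ c₂ x y ℓ with hVdef
  -- basic facts about the run
  have hfst : (P.map Prod.fst).Pairwise (· < ·) := by
    obtain ⟨L, hL, hs, -⟩ := run_fst hrun
    simpa [hL] using hs
  have hsnd : (P.map Prod.snd).Pairwise (· < ·) := (run_snd hrun).1
  have hsym : ∀ pr ∈ P, pr.1 < pr.2 ∧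
      ∃ a : α, V[pr.1]? = some a ∧ V[pr.2]? = some a :=
    run_symbols hrun (fun r => V[r]?) (by simp) (fun k => by simp)
  have hperm : (P.map Prod.fst ++ P.map Prod.snd).Perm (List.range V.length) := by
    have := run_perm hrun
    simpa [List.range_eq_range'] using this
  have hplq : p < q := (hsym (p, q) hpq).1
  -- the main argument, uniform in the symbol z of the block
  have key : ∀ z : α, c₁ ≠ z → c₂ ≠ z →
      (V[p]? = some x ∨ V[p]? = some y) →
      (∀ r, p ≤ r → r ≤ q → V[r]? = some z) → False := by
    intro z hz1 hz2 hdis hall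
    obtain ⟨c, hcodd, hcz⟩ :
        ∃ c : α, Odd ((V.take p).count c) ∧ c ≠ z := by
      rcases parity h₁ h₂ h₃ h₄ h₅ ℓ p hdis with hodd | hodd
      · exact ⟨c₁, hodd, hz1⟩
      · exact ⟨c₂, hodd, hz2⟩
    set f : ℕ → Bool := fun r => decide ((V.take p)[r]? = some c) with hf
    -- there is a pair on which f disagrees
    have hdisagree : ∃ pr ∈ P, f pr.1 ≠ f pr.2 := by
      by_contra hcon
      push_neg at hcon
      have e1 : (List.range V.length).countP f = (V.take p).count c :=
        countP_range_eq_count _ _ _ (by simpa using List.length_take_le p V)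
      have e2 : (P.map Prod.fst ++ P.map Prod.snd).countP f
          = (List.range V.length).countP f := hperm.countP_eq f
      rw [List.countP_append, countP_fst_eq_snd f hcon] at e2
      obtain ⟨k, hk⟩ := hcodd
      omega
    obtain ⟨⟨a, b⟩, habP, hab⟩ := hdisagree
    obtain ⟨haltb, s, hsa, hsb⟩ := hsym (a, b) habP
    -- characterize f
    have hfchar : ∀ r : ℕ, f r = true ↔ (r < p ∧ V[r]? = some c) := by
      intro r
      rcases Nat.lt_or_ge r p with hr | hr
      · simp [hf, List.getElem?_take_of_lt hr, hr]
      · have hnone : (V.take p)[r]? = none := by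
          rw [List.getElem?_eq_none]
          exact le_trans (by simpa using List.length_take_le p V) hr
        simp [hf, hnone]
        omega
    -- the common symbol of the pair (a,b) must be c
    have hsc : s = c := by
      by_contra hsc
      have hfa : f a = false := by
        rw [← Bool.not_eq_true, hfchar]
        rintro ⟨-, hv⟩
        rw [hsa] at hv
        exact hsc (Option.some.inj hv)
      have hfb : f b = false := by
        rw [← Bool.not_eq_true, hfchar]
        rintro ⟨-, hv⟩
        rw [hsb] at hv
        exact hsc (Option.some.inj hv)
      exact hab (hfa.trans hfb.symm)
    subst hsc
    -- the pair (a,b) spans position p : a < p ≤ b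
    have halp : a < p := by
      by_contra halp
      have hfa : f a = false := by
        rw [← Bool.not_eq_true, hfchar]
        rintro ⟨hlt, -⟩
        exact halp hlt
      have hfb : f b = true := by
        by_contra hfb'
        rw [Bool.not_eq_true] at hfb'
        exact hab (hfa.trans hfb'.symm)
      obtain ⟨hbp, -⟩ := (hfchar b).1 hfb
      omega
    have hpb : ¬ b < p := by
      intro hbp
      have hfa : f a = true := (hfchar a).2 ⟨halp, hsa⟩
      have hfb : f b = true := (hfchar b).2 ⟨hbp, hsb⟩
      exact hab (hfa.trans hfb.symm)
    -- b lies beyond q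
    have hqb : q < b := by
      by_contra hqb
      push_neg at hqb
      have := hall b (by omega) hqb
      rw [hsb] at this
      exact hcz (Option.some.inj this)
    -- but non-nesting forces b < q
    have := nonnesting hfst hsnd habP hpq halp
    omega
  constructor
  · intro hall
    exact key x (by exact h₂) (by exact h₄) (Or.inl (hall p le_rfl hplq.le)) hall
  · intro hall
    exact key y (by exact h₃) (by exact h₅) (Or.inr (hall p le_rfl hplq.le)) hall
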